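/- Let V be a finite-dimensional complex vector space, j ∈ End(V) with j∘j = −Id, and T : V × V → V an alternating bilinear map. Define the trace contraction T̂ ∈ V* by T̂(X) = Tr(Y ↦ T(X,Y)) and let (D_j T)(X,Y) = j(T(X,Y)) − T(jX,Y) − T(X,jY). Then the trace contraction of D_j T satisfies (D_j T)^(X) = −T̂(jX) for all X; consequently, if D_j T = 3i·T, then T̂ = 0, i.e. Tr(Y ↦ T(X,Y)) = 0 for all X ∈ V. -/

import Mathlib

open LinearMap Module

/-- The derivation action `D_j` of `j` on `V`-valued bilinear maps:
`(D_j A)(X,Y) = j(A(X,Y)) − A(jX,Y) − A(X,jY)`. -/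
noncomputable def DjBil {V : Type*} [AddCommGroup V] [Module ℂ V]
    (j : Module.End ℂ V) (A : V →ₗ[ℂ] V →ₗ[ℂ] V) : V →ₗ[ℂ] V →ₗ[ℂ] V :=
  A.compr₂ j - A.compl₁₂ j LinearMap.id - A.compl₁₂ LinearMap.id j

/-- For `j² = −Id` and an alternating bilinear `T : V × V → V` with trace contraction
`T̂(X) = Tr(Y ↦ T(X,Y))`, the trace contraction of `D_j T` is `X ↦ −T̂(jX)`;
consequently, if `D_j T = 3i·T` then `T̂ = 0`. -/
theorem torsion_trace_DjBil {V : Type*} [AddCommGroup V] [Module ℂ V]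
    [FiniteDimensional ℂ V]
    (j : Module.End ℂ V) (hj : j * j = -1)
    (T : V →ₗ[ℂ] V →ₗ[ℂ] V) (halt : ∀ X : V, T X X = 0) :
    (∀ X : V, LinearMap.trace ℂ V (DjBil j T X) = - LinearMap.trace ℂ V (T (j X))) ∧
    (DjBil j T = (3 * Complex.I) • T → ∀ X : V, LinearMap.trace ℂ V (T X) = 0) := by
  have h1 : ∀ X : V, LinearMap.trace ℂ V (DjBil j T X)
      = - LinearMap.trace ℂ V (T (j X)) := by
    intro X
    have hX : DjBil j T X = j * (T X) - T (j X) - (T X) * j := by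
      ext Y
      simp [DjBil, Module.End.mul_apply, LinearMap.sub_apply]
    rw [hX, map_sub, map_sub, LinearMap.trace_mul_comm]
    ring
  refine ⟨h1, fun h X => ?_⟩
  set f : V → ℂ := fun X => LinearMap.trace ℂ V (T X) with hf
  have key : ∀ X : V, f (j X) = -(3 * Complex.I) * f X := by
    intro X
    have := h1 X
    rw [h] at this
    simp only [LinearMap.smul_apply, map_smul, smul_eq_mul] at this
    have : -(f (j X)) = (3 * Complex.I) * f X := this.symm
    linear_combination -this
  have h2 : f (j (j X)) = (-(3 * Complex.I)) * ((-(3 * Complex.I)) * f X) := by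
    rw [key, key]
  have h3 : j (j X) = -X := by
    have : (j * j) X = (-1 : Module.End ℂ V) X := by rw [hj]
    simpa [Module.End.mul_apply] using this
  rw [h3] at h2
  have h4 : f (-X) = - f X := by simp [hf]
  rw [h4] at h2
  have hI : Complex.I ^ 2 = -1 := Complex.I_sq
  linear_combination (1/8 : ℂ) * h2 + (9/8 * f X) * hI
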